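/- In type $A_2$ with root lattice basis $\alpha_1, \alpha_2$ and Cartan matrix $\begin{pmatrix}2 & -1\\ -1 & 2\end{pmatrix}$, the functions $\mathfrak{J}_\alpha$ defined by the fermionic recursion satisfy $\mathfrak{J}_{a_1\alpha_1 + a_2\alpha_2} = \frac{1}{(q)_{\alpha}^2}\binom{a_1+a_2}{a_1}_q$ for all nonnegative integers $a_1, a_2$, where $(q)_\alpha = \prod_{j=1}^{a_1}(1-q^j)\prod_{j=1}^{a_2}(1-q^j)$. -/

import Mathlib

open Finset

/-- The indeterminate `q`, as a rational function. -/
noncomputable def q : RatFunc ℚ := RatFunc.X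

/-- The q-Pochhammer product `(q)_a = ∏_{m=1}^{a} (1 - q^m)`. -/
noncomputable def qpoch (a : ℕ) : RatFunc ℚ := ∏ m ∈ Finset.range a, (1 - q ^ (m + 1))

/-- The Gaussian binomial coefficient
`[a, b]_q = ∏_{m=1}^a (1-q^m) / (∏_{m=1}^b (1-q^m) ∏_{m=1}^{a-b} (1-q^m))`,
with the convention that it is `0` when `b > a`. -/
noncomputable def gb (a b : ℕ) : RatFunc ℚ :=
  if b ≤ a then qpoch a / (qpoch b * qpoch (a - b)) else 0

lemma q_ne_zero : q ≠ 0 := RatFunc.X_ne_zero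

lemma one_sub_q_pow_ne_zero (m : ℕ) : (1 : RatFunc ℚ) - q ^ (m + 1) ≠ 0 := by
  intro h
  have h2 : (q : RatFunc ℚ) ^ (m+1) = 1 := by linear_combination -h
  have : (algebraMap (Polynomial ℚ) (RatFunc ℚ)) (Polynomial.X ^ (m+1)) =
      (algebraMap (Polynomial ℚ) (RatFunc ℚ)) 1 := by
    simpa [q, map_pow, RatFunc.algebraMap_X] using h2
  have := RatFunc.algebraMap_injective ℚ this
  have hd := congrArg Polynomial.natDegree this
  simp [Polynomial.natDegree_X_pow] at hd
lemma qpoch_ne_zero (n : ℕ) : qpoch n ≠ 0 := by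
  unfold qpoch
  exact Finset.prod_ne_zero_iff.mpr fun m _ => one_sub_q_pow_ne_zero m

lemma qpoch_zero : qpoch 0 = 1 := by simp [qpoch]

lemma qpoch_succ (n : ℕ) : qpoch (n + 1) = qpoch n * (1 - q ^ (n + 1)) := by
  simp [qpoch, Finset.prod_range_succ]

lemma gb_zero_right (n : ℕ) : gb n 0 = 1 := by
  simp [gb, qpoch_zero, div_self (qpoch_ne_zero n)]

lemma gb_self (n : ℕ) : gb n n = 1 := by
  simp [gb, qpoch_zero, div_self (qpoch_ne_zero n)]

lemma gb_eq_zero {n k : ℕ} (h : n < k) : gb n k = 0 := by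
  simp [gb, Nat.not_le.mpr h]

lemma gb_symm {n k : ℕ} (h : k ≤ n) : gb n k = gb n (n - k) := by
  have h2 : n - k ≤ n := Nat.sub_le n k
  have h3 : n - (n - k) = k := Nat.sub_sub_self h
  simp [gb, h, h2, h3, mul_comm]


lemma one_sub_ne (m : ℕ) : (1:RatFunc ℚ) - q^(m+1) ≠ 0 := by
  have := qpoch_ne_zero (m+1)
  rw [qpoch_succ] at this
  exact fun h => this (by rw [h, mul_zero])

lemma pascal₂ (n t : ℕ) : gb (n+1) (t+1) = q^(t+1) * gb n (t+1) + gb n t := by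
  rcases le_or_gt t n with h | h
  · rcases Nat.lt_or_ge t n with h2 | h2
    · -- t < n : n = t + (e+1)
      obtain ⟨e, rfl⟩ : ∃ e, n = t + (e + 1) := ⟨n - t - 1, by omega⟩
      have e1 : t + (e+1) + 1 - (t+1) = e + 1 := by omega
      have e2 : t + (e+1) - (t+1) = e := by omega
      have e3 : t + (e+1) - t = e + 1 := by omega
      rw [gb, gb, gb, if_pos (by omega), if_pos (by omega), if_pos (by omega), e1, e2, e3]
      have r1 : qpoch (t + (e+1) + 1) = qpoch (t+e) * (1 - q^(t+e+1)) * (1 - q^(t+e+2)) := by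
        have h5 : t + (e+1) + 1 = (t+e+1) + 1 := by omega
        rw [h5, qpoch_succ, qpoch_succ]
      have r2 : qpoch (t + (e+1)) = qpoch (t+e) * (1 - q^(t+e+1)) := by
        have : t + (e+1) = (t+e) + 1 := by omega
        rw [this, qpoch_succ]
      rw [r1, r2, qpoch_succ t, qpoch_succ e]
      have h1 := qpoch_ne_zero t
      have h2 := qpoch_ne_zero e
      have h3 := qpoch_ne_zero (t+e)
      have h4 := qpoch_ne_zero (t+e+1)
      have n1 := one_sub_ne t
      have n2 := one_sub_ne e
      have n3 := one_sub_ne (t+e+1)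
      field_simp
      ring
    · -- t = n
      have : t = n := by omega
      subst this
      rw [gb_self, gb_eq_zero (by omega), gb_self, mul_zero, zero_add]
  · rw [gb_eq_zero (by omega), gb_eq_zero (by omega), gb_eq_zero (by omega), mul_zero, add_zero]

lemma pascal₁ (n t : ℕ) : gb (n+1) (t+1) = gb n (t+1) + q^(n-t) * gb n t := by
  rcases le_or_gt t n with h | h
  · rcases Nat.lt_or_ge t n with h2 | h2
    · obtain ⟨e, rfl⟩ : ∃ e, n = t + (e + 1) := ⟨n - t - 1, by omega⟩
      have e0 : t + (e+1) - t = e + 1 := by omega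
      have e1 : t + (e+1) + 1 - (t+1) = e + 1 := by omega
      have e2 : t + (e+1) - (t+1) = e := by omega
      rw [gb, gb, gb, if_pos (by omega), if_pos (by omega), if_pos (by omega), e0, e1, e2]
      have r1 : qpoch (t + (e+1) + 1) = qpoch (t+e) * (1 - q^(t+e+1)) * (1 - q^(t+e+2)) := by
        have h5 : t + (e+1) + 1 = (t+e+1) + 1 := by omega
        rw [h5, qpoch_succ, qpoch_succ]
      have r2 : qpoch (t + (e+1)) = qpoch (t+e) * (1 - q^(t+e+1)) := by
        have : t + (e+1) = (t+e) + 1 := by omega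
        rw [this, qpoch_succ]
      rw [r1, r2, qpoch_succ t, qpoch_succ e]
      have h1 := qpoch_ne_zero t
      have h2 := qpoch_ne_zero e
      have h3 := qpoch_ne_zero (t+e)
      have h4 := qpoch_ne_zero (t+e+1)
      have n1 := one_sub_ne t
      have n2 := one_sub_ne e
      have n3 := one_sub_ne (t+e+1)
      field_simp
      ring
    · have : t = n := by omega
      subst this
      rw [gb_self, gb_eq_zero (by omega), gb_self, Nat.sub_self, pow_zero, one_mul, zero_add]
  · rw [gb_eq_zero (by omega), gb_eq_zero (by omega), gb_eq_zero (by omega), mul_zero, add_zero]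


lemma lemW (b : ℕ) : ∀ a m : ℕ,
    ∑ k ∈ range (b+1), q^(k^2+m*k) * gb a (k+m) * gb b k = gb (a+b) (b+m) := by
  induction b with
  | zero =>
    intro a m
    simp [gb_self]
  | succ b ih =>
    intro a m
    rw [Finset.sum_range_succ']
    have key : ∀ k ∈ range (b+1),
        q^((k+1)^2+m*(k+1)) * gb a (k+1+m) * gb (b+1) (k+1) =
        q^((k+1)^2+m*(k+1)) * gb a ((k+1)+m) * gb b (k+1)
          + q^(m+b+1) * (q^(k^2+(m+1)*k) * gb a (k+(m+1)) * gb b k) := by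
      intro k hk
      have hkb : k ≤ b := by simpa [Nat.lt_succ_iff] using hk
      obtain ⟨c, rfl⟩ : ∃ c, b = k + c := ⟨b - k, by omega⟩
      have hbk : k + c - k = c := by omega
      rw [pascal₁, hbk]
      have h1 : k + 1 + m = k + (m+1) := by omega
      rw [h1]
      ring
    rw [Finset.sum_congr rfl key, Finset.sum_add_distrib, ← Finset.mul_sum, ih a (m+1)]
    have head : q^(0^2+m*0) * gb a (0+m) * gb (b+1) 0 = gb a (0 + m) * gb b 0 := by
      simp [gb_zero_right]
    rw [head]
    have tail : (∑ k ∈ range (b+1),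
        q^((k+1)^2+m*(k+1)) * gb a ((k+1)+m) * gb b (k+1)) + gb a (0+m) * gb b 0
        = ∑ k ∈ range (b+2), q^(k^2+m*k) * gb a (k+m) * gb b k := by
      rw [Finset.sum_range_succ' (fun k => q^(k^2+m*k) * gb a (k+m) * gb b k) (b+1)]
      simp [gb_zero_right]
    have split : (∑ k ∈ range (b+1), q^((k+1)^2+m*(k+1)) * gb a ((k+1)+m) * gb b (k+1))
        + q^(m+b+1) * gb (a+b) (b+(m+1)) + gb a (0 + m) * gb b 0
        = ((∑ k ∈ range (b+1), q^((k+1)^2+m*(k+1)) * gb a ((k+1)+m) * gb b (k+1))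
            + gb a (0+m) * gb b 0) + q^(m+b+1) * gb (a+b) (b+(m+1)) := by ring
    rw [split, tail, Finset.sum_range_succ, gb_eq_zero (by omega : b < b+1), mul_zero, add_zero,
      ih a m]
    have : gb (a+b+1) (b+m+1) = q^(b+m+1) * gb (a+b) (b+m+1) + gb (a+b) (b+m) := pascal₂ (a+b) (b+m)
    have e1 : a + (b+1) = (a+b)+1 := by omega
    have e2 : (b+1) + m = (b+m)+1 := by omega
    rw [e1, e2, this]
    have e3 : b + (m+1) = b+m+1 := by omega
    have e4 : m+b+1 = b+m+1 := by omega
    rw [e3, e4]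
    ring


lemma lemD (n : ℕ) : ∀ k : ℕ,
    ∑ t ∈ range (n+1), q^(t^2+k*t) * gb n t / qpoch (t+k) = 1 / qpoch (n+k) := by
  induction n with
  | zero =>
    intro k
    simp [gb_self]
  | succ n ih =>
    intro k
    rw [Finset.sum_range_succ']
    have key : ∀ s ∈ range (n+1),
        q^((s+1)^2+k*(s+1)) * gb (n+1) (s+1) / qpoch ((s+1)+k) =
        q^((s+1)^2+(k+1)*(s+1)) * gb n (s+1) / qpoch ((s+1)+k)
          + q^(s^2+(k+2)*s+(k+1)) * gb n s / qpoch ((s+1)+k) := by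
      intro s _
      rw [pascal₂]
      have h1 : (s+1)^2+k*(s+1)+(s+1) = (s+1)^2+(k+1)*(s+1) := by ring
      have h2 : (s+1)^2+k*(s+1) = s^2+(k+2)*s+(k+1) := by ring
      field_simp
      ring
    rw [Finset.sum_congr rfl key, Finset.sum_add_distrib]
    -- reassemble first part as full g' sum
    have head : q^(0^2+k*0) * gb (n+1) 0 / qpoch (0+k)
        = q^(0^2+(k+1)*0) * gb n 0 / qpoch (0+k) := by
      simp [gb_zero_right]
    have tail : (∑ s ∈ range (n+1), q^((s+1)^2+(k+1)*(s+1)) * gb n (s+1) / qpoch ((s+1)+k))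
        + q^(0^2+(k+1)*0) * gb n 0 / qpoch (0+k)
        = ∑ t ∈ range (n+2), q^(t^2+(k+1)*t) * gb n t / qpoch (t+k) := by
      rw [Finset.sum_range_succ' (fun t => q^(t^2+(k+1)*t) * gb n t / qpoch (t+k)) (n+1)]
    have split : (∑ s ∈ range (n+1), q^((s+1)^2+(k+1)*(s+1)) * gb n (s+1) / qpoch ((s+1)+k))
        + (∑ s ∈ range (n+1), q^(s^2+(k+2)*s+(k+1)) * gb n s / qpoch ((s+1)+k))
        + q^(0^2+k*0) * gb (n+1) 0 / qpoch (0+k)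
        = ((∑ s ∈ range (n+1), q^((s+1)^2+(k+1)*(s+1)) * gb n (s+1) / qpoch ((s+1)+k))
            + q^(0^2+(k+1)*0) * gb n 0 / qpoch (0+k))
          + ∑ s ∈ range (n+1), q^(s^2+(k+2)*s+(k+1)) * gb n s / qpoch ((s+1)+k) := by
      rw [head]; ring
    rw [split, tail, Finset.sum_range_succ, gb_eq_zero (by omega : n < n+1)]
    simp only [mul_zero, zero_mul, zero_div, add_zero]
    -- now pointwise: g' t = g t - h t
    have key2 : ∀ t ∈ range (n+1),
        q^(t^2+(k+1)*t) * gb n t / qpoch (t+k) =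
        q^(t^2+(k+1)*t) * gb n t / qpoch (t+(k+1))
          - q^(t^2+(k+2)*t+(k+1)) * gb n t / qpoch ((t+1)+k) := by
      intro t _
      have e1 : t+(k+1) = (t+k)+1 := by omega
      have e2 : (t+1)+k = (t+k)+1 := by omega
      rw [e1, e2, qpoch_succ (t+k)]
      have h1 := qpoch_ne_zero (t+k)
      have h2 := one_sub_ne (t+k)
      field_simp
      ring
    rw [Finset.sum_congr rfl key2, Finset.sum_sub_distrib, ih (k+1)]
    have e3 : n+(k+1) = (n+1)+k := by omega
    rw [e3]
    ring


lemma gb_chain {a i k : ℕ} (hk : k ≤ i) (hi : i ≤ a) :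
    gb a i * gb i k = gb a k * gb (a-k) (i-k) := by
  have h1 : k ≤ a := le_trans hk hi
  have h2 : i - k ≤ a - k := by omega
  have e1 : a - k - (i - k) = a - i := by omega
  rw [gb, gb, gb, gb, if_pos hi, if_pos hk, if_pos h1, if_pos h2, e1]
  have n1 := qpoch_ne_zero a
  have n2 := qpoch_ne_zero i
  have n3 := qpoch_ne_zero k
  have n4 := qpoch_ne_zero (a-i)
  have n5 := qpoch_ne_zero (i-k)
  have n6 := qpoch_ne_zero (a-k)
  field_simp

lemma lemE (a k : ℕ) :
    ∑ i ∈ range (a+1), q^((i:ℤ)^2 - (i:ℤ)*(k:ℤ)) * gb a i * gb i k / qpoch i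
      = gb a k / qpoch a := by
  rcases le_or_gt k a with h | h
  · have ha : a + 1 = k + ((a-k)+1) := by omega
    rw [ha, Finset.sum_range_add]
    have z1 : ∑ i ∈ range k, q^((i:ℤ)^2 - (i:ℤ)*(k:ℤ)) * gb a i * gb i k / qpoch i = 0 :=
      Finset.sum_eq_zero fun i hi => by
        rw [show gb i k = 0 from gb_eq_zero (Finset.mem_range.mp hi)]
        simp
    rw [z1, zero_add]
    have key : ∀ t ∈ range ((a-k)+1),
        q^(((k+t:ℕ):ℤ)^2 - ((k+t:ℕ):ℤ)*(k:ℤ)) * gb a (k+t) * gb (k+t) k / qpoch (k+t)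
          = gb a k * (q^(t^2+k*t) * gb (a-k) t / qpoch (t+k)) := by
      intro t ht
      have h1 : k ≤ k + t := by omega
      have h2 : k + t ≤ a := by
        have := Finset.mem_range.mp ht; omega
      have ec : ((k+t:ℕ):ℤ)^2 - ((k+t:ℕ):ℤ)*(k:ℤ) = ((t^2+k*t : ℕ) : ℤ) := by push_cast; ring
      rw [ec, zpow_natCast]
      have e2 : k + t - k = t := by omega
      have hc := gb_chain h1 h2
      rw [e2] at hc
      rw [show qpoch (k+t) = qpoch (t+k) from by rw [Nat.add_comm], mul_assoc, hc]
      ring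
    rw [Finset.sum_congr rfl key, ← Finset.mul_sum, lemD (a-k) k]
    rw [show a - k + k = a from by omega]
    rw [mul_one_div]
  · rw [gb_eq_zero h, zero_div]
    exact Finset.sum_eq_zero fun i hi => by
      rw [gb_eq_zero (show i < k by have := Finset.mem_range.mp hi; omega)]
      simp

lemma lemVle {i j : ℕ} (h : j ≤ i) :
    ∑ k ∈ range (j+1), q^(((i:ℤ)-(k:ℤ))*((j:ℤ)-(k:ℤ))) * gb i k * gb j k = gb (i+j) i := by
  rw [← Finset.sum_range_reflect]
  set m := i - j with hm
  have key : ∀ k ∈ range (j+1),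
      q^(((i:ℤ)-((j+1-1-k:ℕ):ℤ))*((j:ℤ)-((j+1-1-k:ℕ):ℤ))) * gb i (j+1-1-k) * gb j (j+1-1-k)
        = q^(k^2+m*k) * gb i (k+m) * gb j k := by
    intro k hk
    have hkj : k ≤ j := by simpa [Nat.lt_succ_iff] using hk
    have e0 : j + 1 - 1 - k = j - k := by omega
    rw [e0]
    have c1 : ((j-k:ℕ):ℤ) = (j:ℤ) - (k:ℤ) := by omega
    have ec : ((i:ℤ)-((j:ℤ)-(k:ℤ)))*((j:ℤ)-((j:ℤ)-(k:ℤ))) = ((k^2+m*k : ℕ) : ℤ) := by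
      have : ((m:ℕ):ℤ) = (i:ℤ) - (j:ℤ) := by omega
      push_cast [this]
      ring
    rw [c1, ec, zpow_natCast]
    have g1 : gb i (j-k) = gb i (k+m) := by
      rw [gb_symm (show j - k ≤ i by omega), show i - (j-k) = k + m from by omega]
    have g2 : gb j (j-k) = gb j k := by
      rw [gb_symm hkj]
    rw [g1, g2]
  rw [Finset.sum_congr rfl key, lemW j i m, show j + m = i from by omega]

lemma lemV (i j : ℕ) :
    ∑ k ∈ range (j+1), q^(((i:ℤ)-(k:ℤ))*((j:ℤ)-(k:ℤ))) * gb i k * gb j k = gb (i+j) i := by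
  rcases le_or_gt j i with h | h
  · exact lemVle h
  · have sub : range (i+1) ⊆ range (j+1) := by
      intro x hx; simp only [Finset.mem_range] at *; omega
    have hz : ∀ x ∈ range (j+1), x ∉ range (i+1) →
        q^(((i:ℤ)-(x:ℤ))*((j:ℤ)-(x:ℤ))) * gb i x * gb j x = 0 := by
      intro x _ hx
      have : i < x := by
        by_contra hc
        exact hx (Finset.mem_range.mpr (by omega))
      rw [show gb i x = 0 from gb_eq_zero this]
      simp
    rw [← Finset.sum_subset sub hz]
    have key : ∀ k ∈ range (i+1),
        q^(((i:ℤ)-(k:ℤ))*((j:ℤ)-(k:ℤ))) * gb i k * gb j k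
          = q^(((j:ℤ)-(k:ℤ))*((i:ℤ)-(k:ℤ))) * gb j k * gb i k := by
      intro k _
      rw [mul_comm ((i:ℤ)-(k:ℤ))]
      ring
    rw [Finset.sum_congr rfl key, lemVle (le_of_lt h)]
    rw [gb_symm (show j ≤ j + i by omega), show j + i - j = i from by omega,
      show j + i = i + j from by omega]


lemma main_sum (a b : ℕ) :
    ∑ i ∈ range (a+1), ∑ j ∈ range (b+1),
      q^((i:ℤ)^2 - (i:ℤ)*(j:ℤ) + (j:ℤ)^2) * (gb a i * gb b j * gb (i+j) i) /
        (qpoch i * qpoch j)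
      = gb (a+b) a / (qpoch a * qpoch b) := by
  have step1 : ∀ i ∈ range (a+1), ∀ j ∈ range (b+1),
      q^((i:ℤ)^2 - (i:ℤ)*(j:ℤ) + (j:ℤ)^2) * (gb a i * gb b j * gb (i+j) i) /
        (qpoch i * qpoch j)
      = ∑ k ∈ range (b+1),
          q^((k:ℤ)^2) * ((q^((i:ℤ)^2 - (i:ℤ)*(k:ℤ)) * gb a i * gb i k / qpoch i)
            * (q^((j:ℤ)^2 - (j:ℤ)*(k:ℤ)) * gb b j * gb j k / qpoch j)) := by
    intro i hi j hj
    have hjb : j ≤ b := by simpa [Nat.lt_succ_iff] using hj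
    have sub : range (j+1) ⊆ range (b+1) := by
      intro x hx; simp only [Finset.mem_range] at *; omega
    have hz : ∀ x ∈ range (b+1), x ∉ range (j+1) →
        q^(((i:ℤ)-(x:ℤ))*((j:ℤ)-(x:ℤ))) * gb i x * gb j x = 0 := by
      intro x _ hx
      have : j < x := by by_contra hc; exact hx (Finset.mem_range.mpr (by omega))
      rw [show gb j x = 0 from gb_eq_zero this, mul_zero]
    have hV : gb (i+j) i = ∑ k ∈ range (b+1),
        q^(((i:ℤ)-(k:ℤ))*((j:ℤ)-(k:ℤ))) * gb i k * gb j k := by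
      rw [← Finset.sum_subset sub hz, lemV i j]
    rw [hV, Finset.mul_sum, Finset.mul_sum, Finset.sum_div]
    refine Finset.sum_congr rfl fun k _ => ?_
    have qe : q^((i:ℤ)^2 - (i:ℤ)*(j:ℤ) + (j:ℤ)^2) * q^(((i:ℤ)-(k:ℤ))*((j:ℤ)-(k:ℤ)))
        = q^((k:ℤ)^2) * (q^((i:ℤ)^2 - (i:ℤ)*(k:ℤ)) * q^((j:ℤ)^2 - (j:ℤ)*(k:ℤ))) := by
      rw [← zpow_add₀ q_ne_zero, ← zpow_add₀ q_ne_zero, ← zpow_add₀ q_ne_zero]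
      congr 1
      ring
    calc q^((i:ℤ)^2 - (i:ℤ)*(j:ℤ) + (j:ℤ)^2) *
          (gb a i * gb b j * (q^(((i:ℤ)-(k:ℤ))*((j:ℤ)-(k:ℤ))) * gb i k * gb j k)) /
          (qpoch i * qpoch j)
        = (q^((i:ℤ)^2 - (i:ℤ)*(j:ℤ) + (j:ℤ)^2) * q^(((i:ℤ)-(k:ℤ))*((j:ℤ)-(k:ℤ)))) *
            (gb a i * gb i k / qpoch i) * (gb b j * gb j k / qpoch j) := by ring
      _ = (q^((k:ℤ)^2) * (q^((i:ℤ)^2 - (i:ℤ)*(k:ℤ)) * q^((j:ℤ)^2 - (j:ℤ)*(k:ℤ)))) *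
            (gb a i * gb i k / qpoch i) * (gb b j * gb j k / qpoch j) := by rw [qe]
      _ = q^((k:ℤ)^2) * ((q^((i:ℤ)^2 - (i:ℤ)*(k:ℤ)) * gb a i * gb i k / qpoch i)
            * (q^((j:ℤ)^2 - (j:ℤ)*(k:ℤ)) * gb b j * gb j k / qpoch j)) := by ring
  rw [Finset.sum_congr rfl fun i hi => Finset.sum_congr rfl fun j hj => step1 i hi j hj]
  -- swap j and k sums, collapse j-sum with lemE
  have step2 : ∀ i ∈ range (a+1),
      (∑ j ∈ range (b+1), ∑ k ∈ range (b+1),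
        q^((k:ℤ)^2) * ((q^((i:ℤ)^2 - (i:ℤ)*(k:ℤ)) * gb a i * gb i k / qpoch i)
          * (q^((j:ℤ)^2 - (j:ℤ)*(k:ℤ)) * gb b j * gb j k / qpoch j)))
      = ∑ k ∈ range (b+1),
          q^((k:ℤ)^2) * (q^((i:ℤ)^2 - (i:ℤ)*(k:ℤ)) * gb a i * gb i k / qpoch i)
            * (gb b k / qpoch b) := by
    intro i _
    rw [Finset.sum_comm]
    refine Finset.sum_congr rfl fun k _ => ?_
    rw [← lemE b k, Finset.mul_sum]
    refine Finset.sum_congr rfl fun j _ => ?_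
    ring
  rw [Finset.sum_congr rfl step2, Finset.sum_comm]
  have step3 : ∀ k ∈ range (b+1),
      (∑ i ∈ range (a+1),
        q^((k:ℤ)^2) * (q^((i:ℤ)^2 - (i:ℤ)*(k:ℤ)) * gb a i * gb i k / qpoch i)
          * (gb b k / qpoch b))
      = q^(k^2+0*k) * gb a (k+0) * gb b k * (1 / (qpoch a * qpoch b)) := by
    intro k _
    have hsum : ∑ i ∈ range (a+1),
        q^((k:ℤ)^2) * (q^((i:ℤ)^2 - (i:ℤ)*(k:ℤ)) * gb a i * gb i k / qpoch i)
          * (gb b k / qpoch b)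
        = q^((k:ℤ)^2) * (gb b k / qpoch b) *
            ∑ i ∈ range (a+1), q^((i:ℤ)^2 - (i:ℤ)*(k:ℤ)) * gb a i * gb i k / qpoch i := by
      rw [Finset.mul_sum]
      refine Finset.sum_congr rfl fun i _ => ?_
      ring
    rw [hsum, lemE a k]
    have qk : q^((k:ℤ)^2) = q^(k^2+0*k) := by
      rw [← zpow_natCast q (k^2+0*k)]
      congr 1
      push_cast
      ring
    rw [qk, show k + 0 = k from rfl]
    ring
  rw [Finset.sum_congr rfl step3, ← Finset.sum_mul, lemW b a 0]
  rw [show b + 0 = b from rfl, gb_symm (show b ≤ a + b by omega),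
    show a + b - b = a from by omega]
  rw [mul_one_div]


lemma Iic_nat (n : ℕ) : Finset.Iic n = Finset.range (n+1) := by
  ext x; simp [Nat.lt_succ_iff]

lemma qdiv_helper (A B C D E F G X : RatFunc ℚ) (n1 : A ≠ 0) (n2 : B ≠ 0) :
    X / (E * F) * (G / (C * D)^2) =
    X * (A / (C * E) * (B / (D * F)) * G) / (C * D) * (1/(A*B)) := by
  calc X / (E * F) * (G / (C * D)^2)
      = X*G*(E⁻¹*F⁻¹*(C⁻¹)^2*(D⁻¹)^2) * ((A*A⁻¹)*(B*B⁻¹)) := by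
        rw [mul_inv_cancel₀ n1, mul_inv_cancel₀ n2]; ring
    _ = X * (A / (C * E) * (B / (D * F)) * G) / (C * D) * (1/(A*B)) := by ring

lemma lemRec (a b : ℕ) :
    ∑ i ∈ range (a+1), ∑ j ∈ range (b+1),
      q^(i^2+j^2 - i*j) / (qpoch (a-i) * qpoch (b-j)) *
        (gb (i+j) i / (qpoch i * qpoch j)^2)
      = gb (a+b) a / (qpoch a * qpoch b)^2 := by
  have key : ∀ i ∈ range (a+1), ∀ j ∈ range (b+1),
      q^(i^2+j^2 - i*j) / (qpoch (a-i) * qpoch (b-j)) *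
        (gb (i+j) i / (qpoch i * qpoch j)^2)
      = q^((i:ℤ)^2 - (i:ℤ)*(j:ℤ) + (j:ℤ)^2) * (gb a i * gb b j * gb (i+j) i) /
          (qpoch i * qpoch j) * (1 / (qpoch a * qpoch b)) := by
    intro i hi j hj
    have hia : i ≤ a := by simpa [Nat.lt_succ_iff] using hi
    have hjb : j ≤ b := by simpa [Nat.lt_succ_iff] using hj
    have hle : i*j ≤ i^2 + j^2 := by
      rcases le_total i j with h | h
      · calc i*j ≤ j*j := Nat.mul_le_mul_right j h
          _ ≤ i^2 + j^2 := by rw [pow_two, pow_two]; omega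
      · calc i*j ≤ i*i := Nat.mul_le_mul_left i h
          _ ≤ i^2 + j^2 := by rw [pow_two, pow_two]; omega
    have qe : q^(i^2+j^2 - i*j) = q^((i:ℤ)^2 - (i:ℤ)*(j:ℤ) + (j:ℤ)^2) := by
      rw [← zpow_natCast q (i^2+j^2-i*j)]
      congr 1
      push_cast [hle]
      ring
    have ga : gb a i = qpoch a / (qpoch i * qpoch (a-i)) := by rw [gb, if_pos hia]
    have gbj : gb b j = qpoch b / (qpoch j * qpoch (b-j)) := by rw [gb, if_pos hjb]
    rw [qe, ga, gbj]
    exact qdiv_helper (qpoch a) (qpoch b) (qpoch i) (qpoch j) (qpoch (a-i)) (qpoch (b-j))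
      (gb (i+j) i) (q^((i:ℤ)^2 - (i:ℤ)*(j:ℤ) + (j:ℤ)^2)) (qpoch_ne_zero a) (qpoch_ne_zero b)
  rw [Finset.sum_congr rfl fun i hi => Finset.sum_congr rfl fun j hj => key i hi j hj]
  have : ∀ i ∈ range (a+1), (∑ j ∈ range (b+1),
      q^((i:ℤ)^2 - (i:ℤ)*(j:ℤ) + (j:ℤ)^2) * (gb a i * gb b j * gb (i+j) i) /
          (qpoch i * qpoch j) * (1 / (qpoch a * qpoch b)))
      = (∑ j ∈ range (b+1),
      q^((i:ℤ)^2 - (i:ℤ)*(j:ℤ) + (j:ℤ)^2) * (gb a i * gb b j * gb (i+j) i) /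
          (qpoch i * qpoch j)) * (1 / (qpoch a * qpoch b)) := by
    intro i _
    rw [Finset.sum_mul]
  rw [Finset.sum_congr rfl this, ← Finset.sum_mul, main_sum]
  ring



/-- in type `A₂`, if `𝔍` satisfies the fermionic recursion
`𝔍₀ = 1`, `𝔍_α = ∑_{0 ≤ β ≤ α} q^{(β,β)/2}/(q)_{α-β} 𝔍_β`, where for
`β = b₁α₁ + b₂α₂` one has `(β,β)/2 = b₁² - b₁b₂ + b₂²`, then
`𝔍_{a₁α₁+a₂α₂} = [a₁+a₂, a₁]_q / (q)_α²` with `(q)_α = (q)_{a₁}(q)_{a₂}`.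
(Note `b₁ b₂ ≤ b₁² + b₂²`, so the truncated natural subtraction in the exponent
computes `b₁² - b₁b₂ + b₂²` exactly.) -/
theorem stmt_7 (J : ℕ × ℕ → RatFunc ℚ)
    (hJ : ∀ α : ℕ × ℕ,
      J α = ∑ β ∈ Finset.Iic α,
        q ^ (β.1 ^ 2 + β.2 ^ 2 - β.1 * β.2) /
          (qpoch (α.1 - β.1) * qpoch (α.2 - β.2)) * J β)
    (hJ0 : J (0, 0) = 1) :
    ∀ a₁ a₂ : ℕ,
      J (a₁, a₂) = gb (a₁ + a₂) a₁ / (qpoch a₁ * qpoch a₂) ^ 2 := by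
  suffices H : ∀ n a₁ a₂ : ℕ, a₁ + a₂ = n →
      J (a₁, a₂) = gb (a₁ + a₂) a₁ / (qpoch a₁ * qpoch a₂) ^ 2 by
    intro a₁ a₂; exact H (a₁+a₂) a₁ a₂ rfl
  intro n
  induction n using Nat.strong_induction_on with
  | _ n IH =>
    intro a₁ a₂ hn
    by_cases h0 : a₁ = 0 ∧ a₂ = 0
    · obtain ⟨rfl, rfl⟩ := h0
      rw [hJ0, gb_self, qpoch_zero]
      norm_num
    · have hF : ∑ β ∈ Finset.Iic ((a₁, a₂) : ℕ × ℕ),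
          q ^ (β.1 ^ 2 + β.2 ^ 2 - β.1 * β.2) /
            (qpoch (a₁ - β.1) * qpoch (a₂ - β.2)) *
              (gb (β.1 + β.2) β.1 / (qpoch β.1 * qpoch β.2) ^ 2)
          = gb (a₁ + a₂) a₁ / (qpoch a₁ * qpoch a₂) ^ 2 := by
        rw [← Finset.Iic_product_Iic, Finset.sum_product, Iic_nat a₁, Iic_nat a₂]
        exact lemRec a₁ a₂
      have hJs := hJ (a₁, a₂)
      have hmem : ((a₁, a₂) : ℕ × ℕ) ∈ Finset.Iic ((a₁, a₂) : ℕ × ℕ) :=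
        Finset.mem_Iic.mpr le_rfl
      rw [← Finset.add_sum_erase _ _ hmem] at hJs hF
      simp only [Nat.sub_self, qpoch_zero, mul_one, one_mul, div_one] at hJs hF
      have hsame : ∑ β ∈ (Finset.Iic ((a₁, a₂) : ℕ × ℕ)).erase (a₁, a₂),
          q ^ (β.1 ^ 2 + β.2 ^ 2 - β.1 * β.2) /
            (qpoch (a₁ - β.1) * qpoch (a₂ - β.2)) * J β
          = ∑ β ∈ (Finset.Iic ((a₁, a₂) : ℕ × ℕ)).erase (a₁, a₂),
          q ^ (β.1 ^ 2 + β.2 ^ 2 - β.1 * β.2) /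
            (qpoch (a₁ - β.1) * qpoch (a₂ - β.2)) *
              (gb (β.1 + β.2) β.1 / (qpoch β.1 * qpoch β.2) ^ 2) := by
        refine Finset.sum_congr rfl fun β hβ => ?_
        have hne := Finset.ne_of_mem_erase hβ
        have hle : β ≤ (a₁, a₂) := Finset.mem_Iic.mp (Finset.mem_of_mem_erase hβ)
        have h1 : β.1 ≤ a₁ := hle.1
        have h2 : β.2 ≤ a₂ := hle.2
        have hlt : β.1 + β.2 < n := by
          rcases Nat.lt_or_ge (β.1 + β.2) n with h | h
          · exact h
          · exfalso
            have e1 : β.1 = a₁ := by omega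
            have e2 : β.2 = a₂ := by omega
            exact hne (Prod.ext e1 e2)
        have := IH (β.1 + β.2) hlt β.1 β.2 rfl
        rw [show ((β.1, β.2) : ℕ × ℕ) = β from rfl] at this
        rw [this]
      rw [hsame] at hJs
      -- now: hJs : J (a₁,a₂) = q^e * J (a₁,a₂) + S, hF : q^e * F + S = F
      set e := a₁^2 + a₂^2 - a₁*a₂ with he
      have hepos : 1 ≤ e := by
        have hor : a₁ ≠ 0 ∨ a₂ ≠ 0 := by tauto
        have h1 : 1 ≤ a₁ + a₂ := by omega
        have h2 : a₁ * a₂ + 1 ≤ a₁^2 + a₂^2 := by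
          zify
          nlinarith [sq_nonneg ((a₁:ℤ) - a₂), sq_nonneg ((a₁:ℤ) + a₂ - 1)]
        exact Nat.le_sub_of_add_le (by omega : 1 + a₁ * a₂ ≤ a₁^2 + a₂^2)
      have hq : (1 : RatFunc ℚ) - q^e ≠ 0 := by
        obtain ⟨m, hm⟩ : ∃ m, e = m + 1 := ⟨e - 1, by omega⟩
        rw [hm]
        exact one_sub_ne m
      have key : (1 - q^e) * (J (a₁, a₂) - gb (a₁ + a₂) a₁ / (qpoch a₁ * qpoch a₂) ^ 2)
          = 0 := by
        linear_combination hJs + hF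
      have := mul_eq_zero.mp key
      rcases this with h | h
      · exact absurd h hq
      · exact sub_eq_zero.mp h
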